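/- Let c_0, c_1, ..., c_{k-1} be i.i.d. Bernoulli(γ_0) random variables with γ_0 ∈ [0,1], and let ζ ∈ (0,1], b ∈ [0,1]. Define Γ_{k-1} = (1-ζ) ∑_{j=0}^{k-1} c_j b^{k-j-1} ζ^{∑_{n=j+1}^{k-1} c_n}. Then E[Γ_{k-1}] = γ_0 (1-ζ) (1 - r^k)/(1 - r), where r = b(γ_0 ζ + 1 - γ_0), provided r ≠ 1. -/
import Mathlib


open Finset

/-- Expected value of the recommendation weight `Γ_{k-1}` under i.i.d. Bernoulli(γ₀)
clicks: `E[Γ_{k-1}] = γ₀(1-ζ)(1-r^k)/(1-r)` with `r = b(γ₀ζ + 1 - γ₀)`.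
The expectation is written as a sum over all click paths `c : Fin k → Bool`,
each weighted by its Bernoulli product probability. -/
theorem expected_gamma_fixed_policy
    (k : ℕ) (γ0 ζ b : ℝ)
    (hγ0 : γ0 ∈ Set.Icc (0 : ℝ) 1) (hζ : ζ ∈ Set.Ioc (0 : ℝ) 1)
    (hb : b ∈ Set.Icc (0 : ℝ) 1)
    (hr : b * (γ0 * ζ + 1 - γ0) ≠ 1) :
    ∑ c : Fin k → Bool,
        (∏ j : Fin k, if c j then γ0 else 1 - γ0) *
          ((1 - ζ) * ∑ j : Fin k,
            (if c j then (1 : ℝ) else 0) * b ^ (k - (j : ℕ) - 1) *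
              ζ ^ (∑ n ∈ Finset.univ.filter (fun n : Fin k => (j : ℕ) < (n : ℕ)),
                    (if c n then 1 else 0)))
      = γ0 * (1 - ζ) * (1 - (b * (γ0 * ζ + 1 - γ0)) ^ k) / (1 - b * (γ0 * ζ + 1 - γ0)) := by
  set s : ℝ := γ0 * ζ + 1 - γ0 with hs
  -- per-j expectation
  have key : ∀ j : Fin k,
      (∑ c : Fin k → Bool, (∏ i : Fin k, if c i then γ0 else 1 - γ0) *
        ((if c j then (1:ℝ) else 0) *
          ζ ^ (∑ n ∈ Finset.univ.filter (fun n : Fin k => (j:ℕ) < (n:ℕ)),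
                (if c n then 1 else 0))))
      = γ0 * s ^ (k - (j:ℕ) - 1) := by
    intro j
    have hfac : ∀ c : Fin k → Bool,
        (∏ i : Fin k, if c i then γ0 else 1 - γ0) *
          ((if c j then (1:ℝ) else 0) *
            ζ ^ (∑ n ∈ Finset.univ.filter (fun n : Fin k => (j:ℕ) < (n:ℕ)),
                  (if c n then 1 else 0)))
        = ∏ i : Fin k, ((if c i then γ0 else 1 - γ0) *
            (if i = j then (if c i then (1:ℝ) else 0) else 1) *
            (if (j:ℕ) < (i:ℕ) then ζ ^ (if c i then 1 else 0) else 1)) := by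
      intro c
      rw [Finset.prod_mul_distrib, Finset.prod_mul_distrib, Finset.prod_ite_eq']
      simp only [Finset.mem_univ, if_true]
      rw [← Finset.prod_filter, ← Finset.prod_pow_eq_pow_sum]
      ring
    simp_rw [hfac]
    have hswap := Finset.prod_univ_sum (fun _ : Fin k => (Finset.univ : Finset Bool))
      (fun i x => (if x then γ0 else 1 - γ0) *
            (if i = j then (if x then (1:ℝ) else 0) else 1) *
            (if (j:ℕ) < (i:ℕ) then ζ ^ (if x then 1 else 0) else 1))
    rw [Fintype.piFinset_univ] at hswap
    rw [← hswap]
    have hinner : ∀ i : Fin k,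
        (∑ x : Bool, (if x then γ0 else 1 - γ0) *
            (if i = j then (if x then (1:ℝ) else 0) else 1) *
            (if (j:ℕ) < (i:ℕ) then ζ ^ (if x then 1 else 0) else 1))
        = (if i = j then γ0 else 1) * (if (j:ℕ) < (i:ℕ) then s else 1) := by
      intro i
      rw [Fintype.sum_bool]
      by_cases hij : i = j
      · subst hij
        simp [lt_irrefl]
      · by_cases hji : (j:ℕ) < (i:ℕ) <;> simp [hij, hji, hs] <;> ring
    simp_rw [hinner]
    rw [Finset.prod_mul_distrib, Finset.prod_ite_eq']
    simp only [Finset.mem_univ, if_true]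
    rw [← Finset.prod_filter, Finset.prod_const]
    congr 1
    have hIoi : (Finset.univ.filter (fun i : Fin k => (j:ℕ) < (i:ℕ))) = Finset.Ioi j := by
      ext i
      simp only [Finset.mem_filter, Finset.mem_univ, true_and, Finset.mem_Ioi, Fin.lt_def]
    rw [hIoi, Fin.card_Ioi]
    congr 1
    omega
  -- rearrange LHS
  have lhs_eq :
      (∑ c : Fin k → Bool,
        (∏ i : Fin k, if c i then γ0 else 1 - γ0) *
          ((1 - ζ) * ∑ j : Fin k,
            (if c j then (1 : ℝ) else 0) * b ^ (k - (j : ℕ) - 1) *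
              ζ ^ (∑ n ∈ Finset.univ.filter (fun n : Fin k => (j : ℕ) < (n : ℕ)),
                    (if c n then 1 else 0))))
      = (1 - ζ) * ∑ j : Fin k, b ^ (k - (j:ℕ) - 1) *
          (∑ c : Fin k → Bool, (∏ i : Fin k, if c i then γ0 else 1 - γ0) *
            ((if c j then (1:ℝ) else 0) *
              ζ ^ (∑ n ∈ Finset.univ.filter (fun n : Fin k => (j:ℕ) < (n:ℕ)),
                    (if c n then 1 else 0)))) := by
    rw [Finset.mul_sum]
    simp_rw [Finset.mul_sum]
    rw [Finset.sum_comm]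
    congr 1
    ext j
    congr 1
    ext c
    ring
  rw [lhs_eq]
  simp_rw [key]
  have hreindex : (∑ j : Fin k, b ^ (k - (j:ℕ) - 1) * (γ0 * s ^ (k - (j:ℕ) - 1)))
      = γ0 * ∑ m ∈ Finset.range k, (b * s) ^ m := by
    rw [Fin.sum_univ_eq_sum_range (fun j => b ^ (k - j - 1) * (γ0 * s ^ (k - j - 1))) k]
    rw [Finset.mul_sum]
    rw [← Finset.sum_range_reflect (fun m => γ0 * (b * s) ^ m) k]
    apply Finset.sum_congr rfl
    intro j hj
    rw [mul_pow]
    have : k - 1 - j = k - j - 1 := by omega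
    rw [this]
    ring
  rw [hreindex, geom_sum_eq hr k]
  have h1 : (1 : ℝ) - b * s ≠ 0 := sub_ne_zero.mpr (Ne.symm hr)
  have h2 : b * s - 1 ≠ 0 := sub_ne_zero.mpr hr
  field_simp
  ring
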